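/- If p_1 < p_2 are primes with p_1 > 8, then the square of side length n = p_1²·p_2 has no perfect Mondrian partition into k ≥ p_1 rectangles; likewise, if p_1 < p_2 are primes with p_1 > 6, then the square of side length n = p_1·p_2² has no perfect Mondrian partition into k ≥ p_1 rectangles. -/

import Mathlib

/-- An axis-aligned rectangle with integer coordinates placed on the grid:
lower-left corner `(x, y)`, width `w`, and height `h`. -/
structure Rect where
  x : ℕ
  y : ℕ
  w : ℕ
  h : ℕ
deriving DecidableEq

/-- The area of a rectangle. -/
def Rect.area (r : Rect) : ℕ := r.w * r.h

/-- Two rectangles are congruent if they have the same dimensions,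
possibly after a ninety-degree rotation. -/
def Rect.Congruent (r s : Rect) : Prop :=
  (r.w = s.w ∧ r.h = s.h) ∨ (r.w = s.h ∧ r.h = s.w)

/-- The rectangle `r` covers the unit grid cell `[i, i+1) × [j, j+1)`. -/
def Rect.Covers (r : Rect) (i j : ℕ) : Prop :=
  r.x ≤ i ∧ i < r.x + r.w ∧ r.y ≤ j ∧ j < r.y + r.h

/-- A Mondrian partition of the `n × n` square: a finite collection of
pairwise non-congruent rectangles with positive integer side lengths that
tile the square (every cell of the square is covered by exactly one
rectangle, and rectangles lie inside the square). -/
structure Mondrian (n : ℕ) where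
  rects : Finset Rect
  pos : ∀ r ∈ rects, 0 < r.w ∧ 0 < r.h
  inside : ∀ r ∈ rects, r.x + r.w ≤ n ∧ r.y + r.h ≤ n
  cover : ∀ i j : ℕ, i < n → j < n → ∃! r : Rect, r ∈ rects ∧ r.Covers i j
  noncong : ∀ r ∈ rects, ∀ s ∈ rects, r ≠ s → ¬ r.Congruent s

/-- The defect of a Mondrian partition: the difference between the largest
and the smallest rectangle areas. -/
def Mondrian.defect {n : ℕ} (P : Mondrian n) : ℕ :=
  P.rects.sup fun r => P.rects.sup fun s => r.area - s.area

/-- A Mondrian partition is perfect if all its rectangles have the same area. -/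
def Mondrian.IsPerfect {n : ℕ} (P : Mondrian n) : Prop :=
  ∀ r ∈ P.rects, ∀ s ∈ P.rects, r.area = s.area

/-- `mondrianDk n k` is the minimum defect over all Mondrian partitions of the
`n × n` square using exactly `k` rectangles. -/
noncomputable def mondrianDk (n k : ℕ) : ℕ :=
  sInf {d | ∃ P : Mondrian n, P.rects.card = k ∧ P.defect = d}

/-- `mondrianD n` is the minimum defect over all Mondrian partitions of the
`n × n` square (into at least two rectangles). -/
noncomputable def mondrianD (n : ℕ) : ℕ :=
  sInf {d | ∃ P : Mondrian n, 2 ≤ P.rects.card ∧ P.defect = d}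

/-- cells covered by r -/
def Rect.cells (r : Rect) : Finset (ℕ × ℕ) :=
  Finset.Ico r.x (r.x + r.w) ×ˢ Finset.Ico r.y (r.y + r.h)

lemma Rect.mem_cells {r : Rect} {p : ℕ × ℕ} :
    p ∈ r.cells ↔ r.Covers p.1 p.2 := by
  simp [Rect.cells, Rect.Covers, Finset.mem_Ico, and_assoc]

lemma Rect.card_cells (r : Rect) : r.cells.card = r.area := by
  simp [Rect.cells, Rect.area]

lemma Mondrian.sum_area {n : ℕ} (P : Mondrian n) :
    ∑ r ∈ P.rects, r.area = n * n := by
  have hgrid : Finset.range n ×ˢ Finset.range n = P.rects.biUnion Rect.cells := by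
    ext p
    simp only [Finset.mem_product, Finset.mem_range, Finset.mem_biUnion, Rect.mem_cells]
    constructor
    · rintro ⟨h1, h2⟩
      obtain ⟨r, ⟨hr, hc⟩, -⟩ := P.cover p.1 p.2 h1 h2
      exact ⟨r, hr, hc⟩
    · rintro ⟨r, hr, hc⟩
      obtain ⟨h1, h2, h3, h4⟩ := hc
      obtain ⟨h5, h6⟩ := P.inside r hr
      exact ⟨lt_of_lt_of_le h2 h5, lt_of_lt_of_le h4 h6⟩
  have hdisj : ∀ r ∈ P.rects, ∀ s ∈ P.rects, r ≠ s → Disjoint r.cells s.cells := by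
    intro r hr s hs hrs
    rw [Finset.disjoint_left]
    intro p hpr hps
    rw [Rect.mem_cells] at hpr hps
    have h1 : p.1 < n := lt_of_lt_of_le hpr.2.1 (P.inside r hr).1
    have h2 : p.2 < n := lt_of_lt_of_le hpr.2.2.2 (P.inside r hr).2
    obtain ⟨u, -, hu⟩ := P.cover p.1 p.2 h1 h2
    exact hrs ((hu r ⟨hr, hpr⟩).trans (hu s ⟨hs, hps⟩).symm)
  calc ∑ r ∈ P.rects, r.area = ∑ r ∈ P.rects, r.cells.card := by
        simp [Rect.card_cells]
    _ = (P.rects.biUnion Rect.cells).card := (Finset.card_biUnion hdisj).symm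
    _ = (Finset.range n ×ˢ Finset.range n).card := by rw [hgrid]
    _ = n * n := by simp

/-- pairing bound on small divisors -/
lemma small_divisors_bound {a : ℕ} (ha : 0 < a) :
    2 * ((a.divisors.filter (fun d => d * d ≤ a)).card) ≤ a.divisors.card + 1 := by
  set S := a.divisors.filter (fun d => d * d ≤ a) with hS
  set S' := a.divisors.filter (fun d => a ≤ d * d) with hS'
  have hcard : S.card = S'.card := by
    apply Finset.card_nbij' (i := fun d => a / d) (j := fun d => a / d)
    · intro d hd
      simp only [hS, hS', Finset.mem_coe, Finset.mem_filter, Nat.mem_divisors] at hd ⊢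
      obtain ⟨⟨hdvd, hne⟩, hle⟩ := hd
      have hd0 : 0 < d := Nat.pos_of_dvd_of_pos hdvd ha
      have hq : d * (a / d) = a := Nat.mul_div_cancel' hdvd
      have hle2 : d ≤ a / d := by
        have := hle.trans_eq hq.symm
        exact Nat.le_of_mul_le_mul_left this hd0
      refine ⟨⟨Nat.div_dvd_of_dvd hdvd, hne⟩, ?_⟩
      calc a = d * (a / d) := hq.symm
        _ ≤ (a / d) * (a / d) := Nat.mul_le_mul_right _ hle2
    · intro d hd
      simp only [hS, hS', Finset.mem_coe, Finset.mem_filter, Nat.mem_divisors] at hd ⊢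
      obtain ⟨⟨hdvd, hne⟩, hle⟩ := hd
      have hd0 : 0 < d := Nat.pos_of_dvd_of_pos hdvd ha
      have hq : d * (a / d) = a := Nat.mul_div_cancel' hdvd
      have hle2 : a / d ≤ d := by
        by_contra hcon
        push_neg at hcon
        have : d * d < a := by
          calc d * d < d * (a / d) := Nat.mul_lt_mul_of_pos_left hcon hd0
            _ = a := hq
        omega
      refine ⟨⟨Nat.div_dvd_of_dvd hdvd, hne⟩, ?_⟩
      calc (a/d) * (a/d) ≤ (a/d) * d := Nat.mul_le_mul_left _ hle2
        _ = a := by rw [mul_comm]; exact hq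
    · intro d hd
      simp only [hS, Finset.mem_coe, Finset.mem_filter, Nat.mem_divisors] at hd
      exact Nat.div_div_self hd.1.1 (by omega)
    · intro d hd
      simp only [hS', Finset.mem_coe, Finset.mem_filter, Nat.mem_divisors] at hd
      exact Nat.div_div_self hd.1.1 (by omega)
  have hunion : S ∪ S' = a.divisors := by
    ext d
    simp only [hS, hS', Finset.mem_union, Finset.mem_filter]
    constructor
    · rintro (⟨h, -⟩ | ⟨h, -⟩) <;> exact h
    · intro h
      rcases le_total (d * d) a with h' | h'
      · exact Or.inl ⟨h, h'⟩
      · exact Or.inr ⟨h, h'⟩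
  have hinter : (S ∩ S').card ≤ 1 := by
    rw [Finset.card_le_one]
    intro d hd e he
    simp only [hS, hS', Finset.mem_inter, Finset.mem_filter] at hd he
    have hd2 : d * d = a := le_antisymm hd.1.2 hd.2.2
    have he2 : e * e = a := le_antisymm he.1.2 he.2.2
    nlinarith [Nat.lt_or_ge d e, hd2, he2]
  have h2 := Finset.card_union_add_card_inter S S'
  rw [hunion] at h2
  omega

/-- key structural lemma -/
lemma mondrian_key {n : ℕ} (P : Mondrian n) (hP : P.IsPerfect)
    (hk : 1 ≤ P.rects.card) :
    ∃ a : ℕ, 0 < a ∧ a * P.rects.card = n * n ∧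
      2 * P.rects.card ≤ a.divisors.card + 1 := by
  obtain ⟨r₀, hr₀⟩ := Finset.card_pos.mp hk
  set a := r₀.area with ha
  have hae : ∀ r ∈ P.rects, r.area = a := fun r hr => hP r hr r₀ hr₀
  have ha0 : 0 < a := by
    obtain ⟨h1, h2⟩ := P.pos r₀ hr₀
    exact Nat.mul_pos h1 h2
  refine ⟨a, ha0, ?_, ?_⟩
  · rw [← P.sum_area]
    rw [Finset.sum_congr rfl hae, Finset.sum_const, smul_eq_mul, mul_comm]
  · have hinj : ∀ r ∈ P.rects, ∀ s ∈ P.rects,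
        min r.w r.h = min s.w s.h → r = s := by
      intro r hr s hs hmin
      by_contra hne
      apply P.noncong r hr s hs hne
      have har : r.area = a := hae r hr
      have has : s.area = a := hae s hs
      have h1 : min r.w r.h * max r.w r.h = a := by
        rw [← har]; rcases le_total r.w r.h with h | h <;>
          simp [min_eq_left, max_eq_right, min_eq_right, max_eq_left, h, Rect.area, mul_comm]
      have h2 : min s.w s.h * max s.w s.h = a := by
        rw [← has]; rcases le_total s.w s.h with h | h <;>
          simp [min_eq_left, max_eq_right, min_eq_right, max_eq_left, h, Rect.area, mul_comm]
      have hm0 : 0 < min r.w r.h := lt_min (P.pos r hr).1 (P.pos r hr).2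
      have hmax : max r.w r.h = max s.w s.h := by
        rw [hmin] at h1
        have := h1.trans h2.symm
        exact Nat.eq_of_mul_eq_mul_left (hmin ▸ hm0) this
      unfold Rect.Congruent
      rcases le_total r.w r.h with h | h <;> rcases le_total s.w s.h with h' | h' <;>
        simp [min_eq_left, max_eq_right, min_eq_right, max_eq_left, h, h'] at hmin hmax <;>
        omega
    have hmap : ∀ r ∈ P.rects, min r.w r.h ∈ a.divisors.filter (fun d => d * d ≤ a) := by
      intro r hr
      have har : r.area = a := hae r hr
      have h1 : min r.w r.h * max r.w r.h = a := by
        rw [← har]; rcases le_total r.w r.h with h | h <;>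
          simp [min_eq_left, max_eq_right, min_eq_right, max_eq_left, h, Rect.area, mul_comm]
      simp only [Finset.mem_filter, Nat.mem_divisors]
      refine ⟨⟨⟨max r.w r.h, h1.symm⟩, by omega⟩, ?_⟩
      calc min r.w r.h * min r.w r.h ≤ min r.w r.h * max r.w r.h :=
            Nat.mul_le_mul_left _ (min_le_max)
        _ = a := h1
    have hle : P.rects.card ≤ (a.divisors.filter (fun d => d * d ≤ a)).card :=
      Finset.card_le_card_of_injOn _ hmap (fun r hr s hs => hinj r hr s hs)
    have := small_divisors_bound ha0
    omega

lemma card_div_pp {p q i j : ℕ} (hp : p.Prime) (hq : q.Prime) (hne : p ≠ q) :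
    (p ^ i * q ^ j).divisors.card = (i + 1) * (j + 1) := by
  have hco : (p ^ i).Coprime (q ^ j) :=
    Nat.Coprime.pow _ _ ((Nat.coprime_primes hp hq).mpr hne)
  rw [Nat.Coprime.card_divisors_mul hco]
  rw [Nat.divisors_prime_pow hp, Nat.divisors_prime_pow hq]
  simp

lemma div_cancel_prime {p q i j a k' : ℕ} (hp : 0 < p) (hi : 1 ≤ i)
    (h : a * (p * k') = p ^ i * q ^ j) : a ∣ p ^ (i - 1) * q ^ j := by
  refine ⟨k', ?_⟩
  have key : p * (a * k') = p * (p ^ (i - 1) * q ^ j) := by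
    have hii : i - 1 + 1 = i := by omega
    calc p * (a * k') = a * (p * k') := by ring
      _ = p ^ i * q ^ j := h
      _ = p ^ (i - 1 + 1) * q ^ j := by rw [hii]
      _ = p * (p ^ (i - 1) * q ^ j) := by rw [pow_succ]; ring
  exact (Nat.eq_of_mul_eq_mul_left hp key).symm

lemma tau_proper {p q : ℕ} (hp : p.Prime) (hq : q.Prime) (hne : p ≠ q)
    {i j a : ℕ} (hi : 1 ≤ i) (hj : 1 ≤ j)
    (hdvd : a ∣ p ^ i * q ^ j) (hane : a ≠ p ^ i * q ^ j) :
    a.divisors.card ≤ max (i * (j + 1)) ((i + 1) * j) := by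
  have hN0 : p ^ i * q ^ j ≠ 0 := Nat.mul_ne_zero (pow_ne_zero _ hp.ne_zero) (pow_ne_zero _ hq.ne_zero)
  obtain ⟨k, hk⟩ := hdvd
  have hk1 : k ≠ 1 := by
    rintro rfl
    exact hane (by omega)
  have hk0 : k ≠ 0 := by
    rintro rfl
    rw [mul_zero] at hk
    exact hN0 hk
  obtain ⟨r, hr, hrk⟩ := Nat.exists_prime_and_dvd hk1
  have hrN : r ∣ p ^ i * q ^ j := hk ▸ Dvd.dvd.mul_left hrk a
  have hrpq : r = p ∨ r = q := by
    rcases (Nat.Prime.dvd_mul hr).mp hrN with h | h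
    · exact Or.inl ((Nat.prime_dvd_prime_iff_eq hr hp).mp (hr.dvd_of_dvd_pow h))
    · exact Or.inr ((Nat.prime_dvd_prime_iff_eq hr hq).mp (hr.dvd_of_dvd_pow h))
  obtain ⟨k', rfl⟩ := hrk
  rcases hrpq with h | h
  · subst h
    have hdvd2 : a ∣ r ^ (i - 1) * q ^ j := div_cancel_prime hr.pos hi hk.symm
    have hMne : r ^ (i - 1) * q ^ j ≠ 0 :=
      Nat.mul_ne_zero (pow_ne_zero _ hr.ne_zero) (pow_ne_zero _ hq.ne_zero)
    calc a.divisors.card ≤ (r ^ (i-1) * q ^ j).divisors.card :=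
          Finset.card_le_card (Nat.divisors_subset_of_dvd hMne hdvd2)
      _ = (i - 1 + 1) * (j + 1) := card_div_pp hr hq hne
      _ ≤ max (i * (j + 1)) ((i + 1) * j) := by
          have hii : i - 1 + 1 = i := by omega
          rw [hii]; exact le_max_left _ _
  · subst h
    have hk' : a * (r * k') = r ^ j * p ^ i := by rw [← hk]; ring
    have hdvd2 : a ∣ p ^ i * r ^ (j - 1) := by
      have := div_cancel_prime hr.pos hj hk'.symm.symm
      rwa [mul_comm] at this
    have hMne : p ^ i * r ^ (j - 1) ≠ 0 :=
      Nat.mul_ne_zero (pow_ne_zero _ hp.ne_zero) (pow_ne_zero _ hr.ne_zero)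
    calc a.divisors.card ≤ (p ^ i * r ^ (j-1)).divisors.card :=
          Finset.card_le_card (Nat.divisors_subset_of_dvd hMne hdvd2)
      _ = (i + 1) * (j - 1 + 1) := card_div_pp hp hr hne
      _ ≤ max (i * (j + 1)) ((i + 1) * j) := by
          have hjj : j - 1 + 1 = j := by omega
          rw [hjj]; exact le_max_right _ _

/-- If `p₁ < p₂` are primes with `p₁ > 8`, then the square of side
`n = p₁²·p₂` has no perfect Mondrian partition into `k ≥ p₁` rectangles;
if `p₁ > 6`, then the square of side `n = p₁·p₂²` has no perfect Mondrian
partition into `k ≥ p₁` rectangles. -/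
theorem no_perfect_three_almost_prime (p₁ p₂ : ℕ) (hp₁ : p₁.Prime)
    (hp₂ : p₂.Prime) (hlt : p₁ < p₂) :
    (8 < p₁ → ∀ P : Mondrian (p₁ ^ 2 * p₂), p₁ ≤ P.rects.card → ¬ P.IsPerfect) ∧
    (6 < p₁ → ∀ P : Mondrian (p₁ * p₂ ^ 2), p₁ ≤ P.rects.card → ¬ P.IsPerfect) := by
  have hne : p₁ ≠ p₂ := Nat.ne_of_lt hlt
  constructor
  · intro h8 P hcard hperf
    obtain ⟨a, ha0, hak, hbound⟩ := mondrian_key P hperf (by omega)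
    have hNN : p₁ ^ 2 * p₂ * (p₁ ^ 2 * p₂) = p₁ ^ 4 * p₂ ^ 2 := by ring
    rw [hNN] at hak
    have hdvd : a ∣ p₁ ^ 4 * p₂ ^ 2 := ⟨P.rects.card, hak.symm⟩
    have hane : a ≠ p₁ ^ 4 * p₂ ^ 2 := by
      rintro rfl
      have h0 : 0 < p₁ ^ 4 * p₂ ^ 2 := by positivity
      have : P.rects.card = 1 := by
        nlinarith [hak]
      omega
    have := tau_proper hp₁ hp₂ hne (by norm_num) (by norm_num) hdvd hane
    simp only [show (4:ℕ) * (2+1) = 12 by norm_num,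
      show ((4:ℕ)+1) * 2 = 10 by norm_num] at this
    omega
  · intro h6 P hcard hperf
    obtain ⟨a, ha0, hak, hbound⟩ := mondrian_key P hperf (by omega)
    have hNN : p₁ * p₂ ^ 2 * (p₁ * p₂ ^ 2) = p₁ ^ 2 * p₂ ^ 4 := by ring
    rw [hNN] at hak
    have hdvd : a ∣ p₁ ^ 2 * p₂ ^ 4 := ⟨P.rects.card, hak.symm⟩
    have hane : a ≠ p₁ ^ 2 * p₂ ^ 4 := by
      rintro rfl
      have h0 : 0 < p₁ ^ 2 * p₂ ^ 4 := by positivity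
      have : P.rects.card = 1 := by
        nlinarith [hak]
      omega
    have := tau_proper hp₁ hp₂ hne (by norm_num) (by norm_num) hdvd hane
    simp only [show (2:ℕ) * (4+1) = 10 by norm_num,
      show ((2:ℕ)+1) * 4 = 12 by norm_num] at this
    omega
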